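/- Let k be a field of characteristic p and let Q_1,...,Q_n ∈ k[X] with Moore determinant Δ_n(Q) ≠ 0. Then the first derivative of the Dickson invariant c_{n,n-1}(Q) = det(Q,Q^p,...,Q^{p^{n-2}},Q^{p^n})/Δ_n(Q) is c_{n,n-1}(Q)' = -det(Q', Q, Q^p, ..., Q^{p^{n-2}}) · Δ_n(Q)^{p-2}. -/

import Mathlib

open Polynomial Matrix Finset


lemma myDerivProd {R : Type*} [CommSemiring R] {ι : Type*} [DecidableEq ι]
    (s : Finset ι) (f : ι → R[X]) :
    derivative (∏ i ∈ s, f i) = ∑ j ∈ s, (∏ i ∈ s.erase j, f i) * derivative (f j) := by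
  induction s using Finset.induction_on with
  | empty => simp
  | @insert a s ha ih =>
    rw [Finset.prod_insert ha, derivative_mul, ih, Finset.sum_insert ha,
      Finset.erase_insert ha, Finset.mul_sum]
    congr 1
    · ring
    · refine Finset.sum_congr rfl fun j hj => ?_
      have haj : a ≠ j := fun h => ha (h ▸ hj)
      rw [Finset.erase_insert_of_ne haj,
        Finset.prod_insert (fun h => ha (Finset.erase_subset _ _ h)), mul_assoc]

lemma myDerivDet {R : Type*} [CommRing R] {n : ℕ} (M : Matrix (Fin n) (Fin n) R[X]) :
    derivative M.det = ∑ j : Fin n, (M.updateCol j fun i => derivative (M i j)).det := by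
  rw [Matrix.det_apply', map_sum]
  have h1 : ∀ σ : Equiv.Perm (Fin n),
      derivative ((↑↑(Equiv.Perm.sign σ) : R[X]) * ∏ i, M (σ i) i)
        = ∑ j : Fin n, (↑↑(Equiv.Perm.sign σ) : R[X]) *
            ((∏ i ∈ Finset.univ.erase j, M (σ i) i) * derivative (M (σ j) j)) := by
    intro σ
    rw [derivative_mul, derivative_intCast, zero_mul, zero_add, myDerivProd, Finset.mul_sum]
  simp only [h1]
  rw [Finset.sum_comm]
  refine Finset.sum_congr rfl fun j _ => ?_
  rw [Matrix.det_apply']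
  refine Finset.sum_congr rfl fun σ _ => ?_
  have h2 : ∀ i : Fin n, (M.updateCol j fun i => derivative (M i j)) (σ i) i
      = if i = j then derivative (M (σ i) j) else M (σ i) i := by
    intro i; rw [Matrix.updateCol_apply]
  rw [Finset.prod_congr rfl (fun i _ => h2 i), ← Finset.mul_prod_erase _ _ (Finset.mem_univ j),
    if_pos rfl, Finset.prod_congr rfl (fun i hi => if_neg (Finset.mem_erase.mp hi).1)]
  ring

lemma myDerivDetRow {R : Type*} [CommRing R] {n : ℕ} (M : Matrix (Fin n) (Fin n) R[X]) :
    derivative M.det = ∑ i : Fin n, (M.updateRow i fun j => derivative (M i j)).det := by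
  conv_lhs => rw [← Matrix.det_transpose M]
  rw [myDerivDet]
  refine Finset.sum_congr rfl fun i _ => ?_
  rw [Matrix.updateCol_transpose, Matrix.det_transpose]
  simp only [Matrix.transpose_apply]

lemma myDerivPowChar {k : Type*} [CommRing k] (p : ℕ) [Fact p.Prime] [CharP k p]
    (f : k[X]) {e : ℕ} (he : 1 ≤ e) : derivative (f ^ p ^ e) = 0 := by
  rw [derivative_pow]
  have : ((p ^ e : ℕ) : k) = 0 := by
    rw [Nat.cast_pow, CharP.cast_eq_zero k p, zero_pow (by omega)]
  simp [this]


private lemma core {K : Type*} [Field K] (m : ℕ)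
    (V : ℕ → Fin (m + 2) → K) (W : Fin (m + 2) → K)
    (hdet : Matrix.detRowAlternating (fun i : Fin (m + 2) => V (i : ℕ)) ≠ 0) :
    Matrix.detRowAlternating
        (Function.update
          (fun i : Fin (m + 2) => if (i : ℕ) = m + 1 then V (m + 2) else V (i : ℕ)) 0 W)
      * Matrix.detRowAlternating (fun i : Fin (m + 2) => V (i : ℕ))
    - Matrix.detRowAlternating
        (fun i : Fin (m + 2) => if (i : ℕ) = m + 1 then V (m + 2) else V (i : ℕ))
      * Matrix.detRowAlternating (Function.update (fun i : Fin (m + 2) => V (i : ℕ)) 0 W)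
    + Matrix.detRowAlternating
        (Function.update (fun i : Fin (m + 2) => V ((i : ℕ) - 1)) 0 W)
      * Matrix.detRowAlternating (fun i : Fin (m + 2) => V ((i : ℕ) + 1)) = 0 := by
  classical
  set f := (Matrix.detRowAlternating : ((Fin (m + 2) → K) [⋀^Fin (m + 2)]→ₗ[K] K)) with hf
  set rΔ : Fin (m + 2) → Fin (m + 2) → K := fun i => V (i : ℕ) with hrΔ
  set rN : Fin (m + 2) → Fin (m + 2) → K :=
    fun i => if (i : ℕ) = m + 1 then V (m + 2) else V (i : ℕ) with hrN
  set rD : Fin (m + 2) → Fin (m + 2) → K := fun i => V ((i : ℕ) - 1) with hrD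
  set rP : Fin (m + 2) → Fin (m + 2) → K := fun i => V ((i : ℕ) + 1) with hrP
  have hdet' : (Matrix.of rΔ).det ≠ 0 := hdet
  set t : Fin (m + 2) → K := W ᵥ* (Matrix.of rΔ)⁻¹ with ht
  have hW : W = ∑ s : Fin (m + 2), t s • rΔ s := by
    have h1 : t ᵥ* (Matrix.of rΔ) = W := by
      rw [ht, Matrix.vecMul_vecMul,
        Matrix.nonsing_inv_mul _ (isUnit_iff_ne_zero.mpr hdet'), Matrix.vecMul_one]
    funext j
    rw [← h1]
    simp [Matrix.vecMul, dotProduct, Finset.sum_apply]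
  -- the bracket identity for each basis row
  have hterm : ∀ s : Fin (m + 2),
      f (Function.update rN 0 (rΔ s)) * f rΔ - f rN * f (Function.update rΔ 0 (rΔ s))
        + f (Function.update rD 0 (rΔ s)) * f rP = 0 := by
    intro s
    by_cases h0 : s = 0
    · subst h0
      have e1 : Function.update rN 0 (rΔ 0) = rN := by
        funext i
        rcases eq_or_ne i 0 with rfl | h
        · rw [Function.update_self]
          simp [hrN, hrΔ]
        · rw [Function.update_of_ne h]
      have e2 : Function.update rΔ 0 (rΔ 0) = rΔ := Function.update_eq_self 0 rΔ
      have e3 : f (Function.update rD 0 (rΔ 0)) = 0 := by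
        apply f.map_eq_zero_of_eq _ (i := 0) (j := ⟨1, by omega⟩)
        · rw [Function.update_self, Function.update_of_ne (by simp [Fin.ext_iff])]
          simp [hrD, hrΔ]
        · simp [Fin.ext_iff]
      rw [e1, e2, e3]; ring
    · have hval0 : 0 < (s : ℕ) := by
        rcases Nat.eq_zero_or_pos (s : ℕ) with h | h
        · exact absurd (Fin.ext h : s = 0) h0
        · exact h
      by_cases htop : (s : ℕ) = m + 1
      · -- s is the top index
        have e2 : f (Function.update rΔ 0 (rΔ s)) = 0 := by
          apply f.map_eq_zero_of_eq _ (i := 0) (j := s)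
          · rw [Function.update_self, Function.update_of_ne h0]
          · exact Ne.symm h0
        set c1 : Fin (m + 2) := ⟨m, by omega⟩ with hc1
        set c2 : Fin (m + 2) := ⟨m + 1, by omega⟩ with hc2
        set σ := (Fin.cycleRange c1).symm with hσ
        set τ := (Fin.cycleRange c2).symm with hτ
        have hup1 : Function.update rN 0 (rΔ s) = rP ∘ σ := by
          funext i
          by_cases hi0 : i = 0
          · subst hi0
            have hσ0 : σ 0 = c1 := by
              rw [hσ, Equiv.symm_apply_eq]; exact (Fin.cycleRange_self c1).symm
            rw [Function.update_self, Function.comp_apply, hσ0]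
            simp [hrΔ, hrP, hc1, htop]
          · have hiv : 0 < (i : ℕ) := by
              rcases Nat.eq_zero_or_pos (i : ℕ) with h | h
              · exact absurd (Fin.ext h : i = 0) hi0
              · exact h
            by_cases him : (i : ℕ) = m + 1
            · have hσi : σ i = i := by
                rw [hσ, Equiv.symm_apply_eq]
                refine (Fin.cycleRange_of_gt ?_).symm
                rw [hc1]
                simp only [Fin.lt_def, Fin.val_mk]
                omega
              rw [Function.update_of_ne hi0, Function.comp_apply, hσi]
              simp [hrN, hrP, him]
            · have hlt1 : (⟨(i : ℕ) - 1, by omega⟩ : Fin (m + 2)) < c1 := by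
                rw [Fin.lt_def, hc1]; simp; omega
              have hσi : σ i = ⟨(i : ℕ) - 1, by omega⟩ := by
                rw [hσ, Equiv.symm_apply_eq]
                refine (Fin.ext ?_).symm
                rw [Fin.coe_cycleRange_of_lt hlt1]
                simp; omega
              rw [Function.update_of_ne hi0, Function.comp_apply, hσi]
              simp only [hrN, hrP, if_neg him]
              have hvi : (i : ℕ) - 1 + 1 = (i : ℕ) := by omega
              rw [hvi]
        have hup2 : Function.update rD 0 (rΔ s) = rΔ ∘ τ := by
          funext i
          by_cases hi0 : i = 0
          · subst hi0
            have hτ0 : τ 0 = c2 := by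
              rw [hτ, Equiv.symm_apply_eq]; exact (Fin.cycleRange_self c2).symm
            rw [Function.update_self, Function.comp_apply, hτ0]
            simp [hrΔ, hc2, htop]
          · have hiv : 0 < (i : ℕ) := by
              rcases Nat.eq_zero_or_pos (i : ℕ) with h | h
              · exact absurd (Fin.ext h : i = 0) hi0
              · exact h
            have hlt1 : (⟨(i : ℕ) - 1, by omega⟩ : Fin (m + 2)) < c2 := by
              rw [hc2]; simp only [Fin.lt_def, Fin.val_mk]; omega
            have hτi : τ i = ⟨(i : ℕ) - 1, by omega⟩ := by
              rw [hτ, Equiv.symm_apply_eq]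
              refine (Fin.ext ?_).symm
              rw [Fin.coe_cycleRange_of_lt hlt1]
              simp only [Fin.val_mk]; omega
            rw [Function.update_of_ne hi0, Function.comp_apply, hτi]
        have e1 : f (Function.update rN 0 (rΔ s)) = ((-1 : ℤˣ) ^ m) • f rP := by
          rw [hup1, hσ, f.map_perm rP ((Fin.cycleRange c1).symm), Equiv.Perm.sign_symm,
            Fin.sign_cycleRange, hc1]
        have e3 : f (Function.update rD 0 (rΔ s)) = ((-1 : ℤˣ) ^ (m + 1)) • f rΔ := by
          rw [hup2, hτ, f.map_perm rΔ ((Fin.cycleRange c2).symm), Equiv.Perm.sign_symm,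
            Fin.sign_cycleRange, hc2]
        rw [e1, e2, e3]
        simp only [Units.smul_def, zsmul_eq_mul]
        push_cast
        ring
      · -- middle case : 0 < s < m+1
        have e1 : f (Function.update rN 0 (rΔ s)) = 0 := by
          apply f.map_eq_zero_of_eq _ (i := 0) (j := s)
          · rw [Function.update_self, Function.update_of_ne h0]
            simp [hrN, hrΔ, htop]
          · exact Ne.symm h0
        have e2 : f (Function.update rΔ 0 (rΔ s)) = 0 := by
          apply f.map_eq_zero_of_eq _ (i := 0) (j := s)
          · rw [Function.update_self, Function.update_of_ne h0]
          · exact Ne.symm h0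
        have e3 : f (Function.update rD 0 (rΔ s)) = 0 := by
          apply f.map_eq_zero_of_eq _ (i := 0) (j := ⟨(s : ℕ) + 1, by omega⟩)
          · rw [Function.update_self, Function.update_of_ne (fun h => by
              have := congrArg Fin.val h; simp only [Fin.val_zero, Fin.val_mk] at this; omega)]
            simp [hrD, hrΔ]
          · exact fun h => by
              have := congrArg Fin.val h; simp only [Fin.val_zero, Fin.val_mk] at this; omega
        rw [e1, e2, e3]; ring
  -- assemble
  show f (Function.update rN 0 W) * f rΔ - f rN * f (Function.update rΔ 0 W)
      + f (Function.update rD 0 W) * f rP = 0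
  rw [hW, f.map_update_sum, f.map_update_sum, f.map_update_sum]
  simp only [AlternatingMap.map_update_smul]
  rw [Finset.sum_mul, Finset.mul_sum, Finset.sum_mul, ← Finset.sum_sub_distrib,
    ← Finset.sum_add_distrib]
  apply Finset.sum_eq_zero
  intro s _
  simp only [smul_eq_mul]
  linear_combination t s * hterm s


open Polynomial

/-- The Moore matrix of an `n`-tuple `a` in a ring of characteristic `p`:
its `(i,j)` entry is `a j ^ p ^ i`. -/
def mooreMatrix {k : Type*} [CommRing k] (p : ℕ) {n : ℕ} (a : Fin n → k) :
    Matrix (Fin n) (Fin n) k :=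
  Matrix.of fun i j => a j ^ p ^ (i : ℕ)

set_option maxHeartbeats 1000000 in
/-- Derivative of the Dickson invariant `c_{n,n-1}(Q) = N/Δ_n(Q)` where
`N = det(Q,Q^p,…,Q^{p^{n-2}},Q^{p^n})`: writing the derivative of the quotient by the
quotient rule `(N'Δ - NΔ')/Δ²`, one has, in `k(X)`,
`c_{n,n-1}(Q)' = -det(Q',Q,Q^p,…,Q^{p^{n-2}})·Δ_n(Q)^{p-2}`. -/
theorem dickson_invariant_derivative
    {k : Type*} [Field k] (p : ℕ) [Fact p.Prime] [CharP k p]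
    (n : ℕ) (hn : 1 ≤ n) (Q : Fin n → Polynomial k)
    (hQ : (mooreMatrix p Q).det ≠ 0)
    (N : Polynomial k)
    (hN : N = (Matrix.of fun i j : Fin n =>
        if (j : ℕ) = n - 1 then Q i ^ p ^ n else Q i ^ p ^ (j : ℕ)).det) :
    algebraMap (Polynomial k) (RatFunc k)
        (derivative N * (mooreMatrix p Q).det - N * derivative (mooreMatrix p Q).det) /
        algebraMap (Polynomial k) (RatFunc k) ((mooreMatrix p Q).det ^ 2)
      = - algebraMap (Polynomial k) (RatFunc k)
          ((Matrix.of fun i j : Fin n =>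
              if (j : ℕ) = 0 then derivative (Q i) else Q i ^ p ^ ((j : ℕ) - 1)).det
            * (mooreMatrix p Q).det ^ (p - 2)) := by
  classical
  have hp2 : 2 ≤ p := (Fact.out : p.Prime).two_le
  set φ := algebraMap (Polynomial k) (RatFunc k) with hφdef
  have hφinj : Function.Injective φ := RatFunc.algebraMap_injective k
  set Δ := (mooreMatrix p Q).det with hΔ
  set Dd := (Matrix.of fun i j : Fin n =>
      if (j : ℕ) = 0 then derivative (Q i) else Q i ^ p ^ ((j : ℕ) - 1)).det with hDd
  have hΔ0 : φ Δ ≠ 0 := fun h => hQ (hφinj (by rw [h, map_zero]))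
  have hbridge : ∀ (M : Matrix (Fin n) (Fin n) (Polynomial k)),
      φ M.det = Matrix.detRowAlternating (fun i j => φ (M i j)) := by
    intro M; rw [RingHom.map_det]; rfl
  have key : derivative N * Δ - N * derivative Δ = -(Dd * Δ ^ p) := by
    rcases (by omega : n = 1 ∨ 2 ≤ n) with rfl | hn2
    · -- the case n = 1
      have eΔ : Δ = Q 0 := by
        rw [hΔ, Matrix.det_fin_one]; simp [mooreMatrix]
      have eN : N = Q 0 ^ p := by
        rw [hN, Matrix.det_fin_one]; simp
      have eD : Dd = derivative (Q 0) := by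
        rw [hDd, Matrix.det_fin_one]; simp
      have edN : derivative N = 0 := by
        have h1 := myDerivPowChar p (Q 0) (le_refl 1)
        rw [pow_one] at h1
        rw [eN, h1]
      rw [edN, eN, eΔ, eD]; ring
    · -- the main case n ≥ 2
      obtain ⟨m, rfl⟩ : ∃ m, n = m + 2 := ⟨n - 2, by omega⟩
      refine hφinj ?_
      set V : ℕ → Fin (m + 2) → RatFunc k := fun e j => φ (Q j) ^ p ^ e with hV
      set Wv : Fin (m + 2) → RatFunc k := fun j => φ (derivative (Q j)) with hWv
      -- row-oriented determinant formulas
      have hNrow : N = (Matrix.of fun i j : Fin (m + 2) =>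
          if (i : ℕ) = m + 1 then Q j ^ p ^ (m + 2) else Q j ^ p ^ (i : ℕ)).det := by
        have htr : (Matrix.of fun i j : Fin (m + 2) =>
            if (j : ℕ) = m + 2 - 1 then Q i ^ p ^ (m + 2) else Q i ^ p ^ (j : ℕ))ᵀ
            = Matrix.of fun i j : Fin (m + 2) =>
            if (i : ℕ) = m + 1 then Q j ^ p ^ (m + 2) else Q j ^ p ^ (i : ℕ) := by
          ext i j
          simp [Matrix.transpose_apply, show m + 2 - 1 = m + 1 from rfl]
        rw [hN, ← Matrix.det_transpose, htr]
      have hDrow : Dd = (Matrix.of fun i j : Fin (m + 2) =>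
          if (i : ℕ) = 0 then derivative (Q j) else Q j ^ p ^ ((i : ℕ) - 1)).det := by
        have htr : (Matrix.of fun i j : Fin (m + 2) =>
            if (j : ℕ) = 0 then derivative (Q i) else Q i ^ p ^ ((j : ℕ) - 1))ᵀ
            = Matrix.of fun i j : Fin (m + 2) =>
            if (i : ℕ) = 0 then derivative (Q j) else Q j ^ p ^ ((i : ℕ) - 1) := by
          ext i j
          simp [Matrix.transpose_apply]
        rw [hDd, ← Matrix.det_transpose, htr]
      -- derivatives of the two determinants
      have hdΔ : derivative Δ
          = ((mooreMatrix p Q).updateRow 0 fun j => derivative (Q j)).det := by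
        rw [hΔ, myDerivDetRow, Finset.sum_eq_single (0 : Fin (m + 2))]
        · congr 1; funext j; simp [mooreMatrix]
        · intro i _ hi0
          apply Matrix.det_eq_zero_of_row_eq_zero i
          intro j
          rw [Matrix.updateRow_self]
          exact myDerivPowChar p (Q j) (by
            have := Fin.pos_iff_ne_zero.mpr hi0
            omega)
        · intro h; exact absurd (Finset.mem_univ _) h
      have hdN : derivative N = ((Matrix.of fun i j : Fin (m + 2) =>
          if (i : ℕ) = m + 1 then Q j ^ p ^ (m + 2) else Q j ^ p ^ (i : ℕ)).updateRow 0
            fun j => derivative (Q j)).det := by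
        rw [hNrow, myDerivDetRow, Finset.sum_eq_single (0 : Fin (m + 2))]
        · simp
        · intro i _ hi0
          apply Matrix.det_eq_zero_of_row_eq_zero i
          intro j
          rw [Matrix.updateRow_self]
          by_cases him : (i : ℕ) = m + 1
          · rw [Matrix.of_apply, if_pos him]
            exact myDerivPowChar p (Q j) (by omega)
          · rw [Matrix.of_apply, if_neg him]
            exact myDerivPowChar p (Q j) (by
              have := Fin.pos_iff_ne_zero.mpr hi0
              omega)
        · intro h; exact absurd (Finset.mem_univ _) h
      -- transfer everything to the rational function field
      have hφΔ : φ Δ = Matrix.detRowAlternating (fun i : Fin (m + 2) => V (i : ℕ)) := by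
        rw [hΔ, hbridge]
        congr 1
        funext i j
        simp [mooreMatrix, hV, map_pow]
      have hφN : φ N = Matrix.detRowAlternating (fun i : Fin (m + 2) =>
          if (i : ℕ) = m + 1 then V (m + 2) else V (i : ℕ)) := by
        rw [hNrow, hbridge]
        congr 1
        funext i
        by_cases him : (i : ℕ) = m + 1
        · funext j; simp [him, hV, map_pow]
        · funext j; simp [him, hV, map_pow]
      have hφdΔ : φ (derivative Δ) = Matrix.detRowAlternating
          (Function.update (fun i : Fin (m + 2) => V (i : ℕ)) 0 Wv) := by
        rw [hdΔ, hbridge]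
        congr 1
        funext i
        rcases eq_or_ne i 0 with rfl | hi0
        · rw [Function.update_self]
          funext j
          rw [Matrix.updateRow_self]
        · rw [Function.update_of_ne hi0]
          funext j
          rw [Matrix.updateRow_ne hi0]
          simp [mooreMatrix, hV, map_pow]
      have hφdN : φ (derivative N) = Matrix.detRowAlternating
          (Function.update (fun i : Fin (m + 2) =>
            if (i : ℕ) = m + 1 then V (m + 2) else V (i : ℕ)) 0 Wv) := by
        rw [hdN, hbridge]
        congr 1
        funext i
        rcases eq_or_ne i 0 with rfl | hi0
        · rw [Function.update_self]
          funext j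
          rw [Matrix.updateRow_self]
        · rw [Function.update_of_ne hi0]
          funext j
          rw [Matrix.updateRow_ne hi0]
          by_cases him : (i : ℕ) = m + 1
          · simp [him, hV, map_pow]
          · simp [him, hV, map_pow]
      have hφDd : φ Dd = Matrix.detRowAlternating
          (Function.update (fun i : Fin (m + 2) => V ((i : ℕ) - 1)) 0 Wv) := by
        rw [hDrow, hbridge]
        congr 1
        funext i
        rcases eq_or_ne i 0 with rfl | hi0
        · rw [Function.update_self]
          funext j
          simp [hWv]
        · rw [Function.update_of_ne hi0]
          funext j
          have hiv : (i : ℕ) ≠ 0 := fun h => hi0 (Fin.ext h)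
          simp [hiv, hi0, hV, map_pow]
      have hφΔp : (φ Δ) ^ p = Matrix.detRowAlternating
          (fun i : Fin (m + 2) => V ((i : ℕ) + 1)) := by
        haveI : CharP (RatFunc k) p :=
          charP_of_injective_algebraMap (RatFunc.algebraMap_injective k) p
        rw [hφΔ]
        have h1 : (Matrix.of fun i j : Fin (m + 2) => V (i : ℕ) j).det ^ p
            = ((Matrix.of fun i j : Fin (m + 2) => V (i : ℕ) j).map (· ^ p)).det := by
          have h := RingHom.map_det (frobenius (RatFunc k) p)
            (Matrix.of fun i j : Fin (m + 2) => V (i : ℕ) j)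
          simpa [frobenius_def, Matrix.map] using h
        have h2 : Matrix.detRowAlternating (fun i : Fin (m + 2) => V (i : ℕ))
            = (Matrix.of fun i j : Fin (m + 2) => V (i : ℕ) j).det := rfl
        rw [h2, h1]
        have h3 : ((Matrix.of fun i j : Fin (m + 2) => V (i : ℕ) j).map (· ^ p))
            = Matrix.of fun i j : Fin (m + 2) => V ((i : ℕ) + 1) j := by
          ext i j
          simp only [Matrix.map_apply, Matrix.of_apply, hV]
          rw [← pow_mul, ← pow_succ]
        rw [h3]
        rfl
      have hdet' : Matrix.detRowAlternating (fun i : Fin (m + 2) => V (i : ℕ)) ≠ 0 := by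
        rw [← hφΔ]; exact hΔ0
      have hcore := core m V Wv hdet'
      rw [map_sub, _root_.map_mul, _root_.map_mul, map_neg, _root_.map_mul, map_pow]
      rw [hφdN, hφN, hφdΔ, hφDd, hφΔp, hφΔ]
      linear_combination hcore
  rw [key]
  simp only [map_neg, _root_.map_mul, map_pow]
  rw [div_eq_iff (pow_ne_zero 2 hΔ0)]
  have hsplit : (φ Δ) ^ p = (φ Δ) ^ (p - 2) * (φ Δ) ^ 2 := by
    rw [← pow_add, Nat.sub_add_cancel hp2]
  rw [hsplit]; ring
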